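/- Let n ≥ 1, t0 ∈ ℝ, y0 ∈ ℝ^n, and let a, b, L > 0. Suppose f : [t0, t0+a] × {y ∈ ℝ^n : ‖y − y0‖ ≤ b} → ℝ^n is continuous and satisfies ‖f(t,y)‖ ≤ L for all (t,y) in its domain, where ‖·‖ is the maximum norm on ℝ^n. Set c = min{a, b/L}. Then there exists a differentiable function φ : [t0, t0+c] → ℝ^n with φ(t0) = y0, ‖φ(t) − y0‖ ≤ b for all t ∈ [t0, t0+c], and φ'(t) = f(t, φ(t)) for all t ∈ [t0, t0+c] (one-sided derivatives at the endpoints). -/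

import Mathlib

open Set Metric Filter intervalIntegral MeasureTheory Topology
open scoped NNReal
set_option maxHeartbeats 1000000
set_option synthInstance.maxHeartbeats 200000
set_option linter.unusedVariables false


lemma peano_exists_lipschitz_approx {X : Type*} [MetricSpace X] {K : Set X} (hK : IsCompact K)
    (hne : K.Nonempty) {n : ℕ} (F : X → (Fin n → ℝ)) (hF : ContinuousOn F K) {L : ℝ}
    (hL : 0 < L) (hFb : ∀ p ∈ K, ‖F p‖ ≤ L) :
    ∃ g : ℕ → X → (Fin n → ℝ),
      (∀ m : ℕ, LipschitzWith m (g m)) ∧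
      (∀ m p, ‖g m p‖ ≤ L) ∧
      (∀ ε > 0, ∃ M : ℕ, ∀ m ≥ M, ∀ p ∈ K, ‖g m p - F p‖ ≤ ε) := by
  haveI : Nonempty K := hne.to_subtype
  have hLL : (-L : ℝ) ≤ L := by linarith
  -- coordinate bounds
  have hcoord : ∀ p ∈ K, ∀ j, |F p j| ≤ L := fun p hp j =>
    le_trans (by simpa [Real.norm_eq_abs] using norm_le_pi_norm (F p) j) (hFb p hp)
  set clamp : ℝ → ℝ := fun x => max (-L) (min L x) with hclampdef
  have hclamp_lip : ∀ x y : ℝ, dist (clamp x) (clamp y) ≤ dist x y := by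
    intro x y
    have : clamp = Subtype.val ∘ (projIcc (-L) L hLL) := by
      funext z; simp [clamp, projIcc]
    rw [this]
    simpa using ((LipschitzWith.subtype_val _).comp (LipschitzWith.projIcc hLL)).dist_le_mul x y
  have hclamp_eq : ∀ x : ℝ, -L ≤ x → x ≤ L → clamp x = x := by
    intro x h1 h2; simp [clamp, min_eq_right h2, max_eq_right h1]
  have hclamp_mem : ∀ x, |clamp x| ≤ L := by
    intro x
    rw [abs_le]
    exact ⟨le_max_left _ _, max_le (by linarith) (min_le_left _ _)⟩
  set h : ℕ → X → Fin n → ℝ := fun m p j => ⨅ q : K, (F q j + (m : ℝ) * dist p (q : X))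
    with hdef
  have hbdd : ∀ (m : ℕ) (p : X) (j : Fin n),
      BddBelow (range fun q : K => F q j + (m : ℝ) * dist p (q : X)) := by
    rintro m p j
    refine ⟨-L, ?_⟩
    rintro x ⟨q, rfl⟩
    dsimp only
    have h1 : -L ≤ F q j := neg_le_of_abs_le (hcoord q q.2 j)
    have h2 : 0 ≤ (m : ℝ) * dist p (q : X) := by positivity
    linarith
  have h_lb : ∀ m p j, -L ≤ h m p j := fun m p j =>
    le_ciInf fun q => by
      have h1 : -L ≤ F q j := neg_le_of_abs_le (hcoord q q.2 j)
      have h2 : 0 ≤ (m : ℝ) * dist p (q : X) := by positivity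
      linarith
  have h_le : ∀ m, ∀ p ∈ K, ∀ j, h m p j ≤ F p j := by
    intro m p hp j
    have := ciInf_le (hbdd m p j) (⟨p, hp⟩ : K)
    simpa using this
  have h_lipineq : ∀ (m : ℕ) (p p' : X) (j : Fin n), h m p j ≤ h m p' j + m * dist p p' := by
    intro m p p' j
    rw [← sub_le_iff_le_add]
    refine le_ciInf fun q => sub_le_iff_le_add.2 ?_
    calc h m p j ≤ F q j + (m : ℝ) * dist p (q : X) := ciInf_le (hbdd m p j) q
      _ ≤ F q j + (m : ℝ) * (dist p' (q : X) + dist p p') := by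
          have := dist_triangle p p' (q : X)
          have hm : (0:ℝ) ≤ m := Nat.cast_nonneg m
          nlinarith [dist_nonneg (x := p) (y := p')]
      _ = F q j + (m : ℝ) * dist p' (q : X) + m * dist p p' := by ring
  refine ⟨fun m p j => clamp (h m p j), ?_, ?_, ?_⟩
  · intro m
    apply LipschitzWith.of_dist_le_mul
    intro p p'
    rw [dist_pi_le_iff (by positivity)]
    intro j
    refine le_trans (hclamp_lip _ _) ?_
    rw [Real.dist_eq, abs_sub_le_iff]
    push_cast
    constructor
    · linarith [h_lipineq m p p' j]
    · have h2 := h_lipineq m p' p j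
      rw [dist_comm p' p] at h2
      linarith
  · intro m p
    rw [pi_norm_le_iff_of_nonneg hL.le]
    intro j
    simpa [Real.norm_eq_abs] using hclamp_mem (h m p j)
  · intro ε hε
    obtain ⟨δ, hδ, hδ'⟩ := Metric.uniformContinuousOn_iff.1
      (hK.uniformContinuousOn_of_continuous hF) ε hε
    obtain ⟨M, hM⟩ := exists_nat_ge (2 * L / δ)
    refine ⟨M, fun m hm p hp => ?_⟩
    have hgh : ∀ j, clamp (h m p j) = h m p j := fun j =>
      hclamp_eq _ (h_lb m p j) ((h_le m p hp j).trans (le_of_abs_le (hcoord p hp j)))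
    have hMδ : 2 * L ≤ (M : ℝ) * δ := by
      rw [div_le_iff₀ hδ] at hM; linarith
    have key : ∀ j, F p j - ε ≤ h m p j := by
      intro j
      refine le_ciInf fun q => ?_
      rcases lt_or_ge (dist p (q : X)) δ with hd | hd
      · have h1 : dist (F p) (F (q : X)) < ε := hδ' p hp q q.2 hd
        have h2 : |F p j - F q j| ≤ dist (F p) (F (q:X)) := by
          rw [dist_eq_norm]
          simpa [Real.norm_eq_abs] using norm_le_pi_norm (F p - F (q:X)) j
        have h3 : 0 ≤ (m : ℝ) * dist p (q : X) := by positivity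
        rw [abs_le] at h2
        linarith [h2.1]
      · have h1 : -L ≤ F q j := neg_le_of_abs_le (hcoord q q.2 j)
        have h2 : F p j ≤ L := le_of_abs_le (hcoord p hp j)
        have hm' : (M : ℝ) ≤ (m : ℝ) := Nat.cast_le.2 hm
        have h3 : (M : ℝ) * δ ≤ (m : ℝ) * dist p (q : X) := by
          have h0 : (0:ℝ) ≤ M := Nat.cast_nonneg M
          nlinarith
        linarith
    rw [pi_norm_le_iff_of_nonneg hε.le]
    intro j
    simp only [Pi.sub_apply]
    rw [hgh j, Real.norm_eq_abs, abs_le]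
    constructor
    · linarith [key j]
    · linarith [h_le m p hp j]


section
variable {n : ℕ}

theorem peano_main (n : ℕ) (hn : 1 ≤ n) (t0 : ℝ) (y0 : Fin n → ℝ)
    (a b L : ℝ) (ha : 0 < a) (hb : 0 < b) (hL : 0 < L)
    (f : ℝ → (Fin n → ℝ) → (Fin n → ℝ))
    (hf : ContinuousOn (fun p : ℝ × (Fin n → ℝ) => f p.1 p.2)
      (Icc t0 (t0 + a) ×ˢ Metric.closedBall y0 b))
    (hfL : ∀ t ∈ Icc t0 (t0 + a), ∀ y ∈ Metric.closedBall y0 b, ‖f t y‖ ≤ L)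
    (happrox : ∃ g : ℕ → (ℝ × (Fin n → ℝ)) → (Fin n → ℝ),
      (∀ m : ℕ, LipschitzWith m (g m)) ∧
      (∀ m p, ‖g m p‖ ≤ L) ∧
      (∀ ε > 0, ∃ M : ℕ, ∀ m ≥ M, ∀ p ∈ (Icc t0 (t0 + a) ×ˢ Metric.closedBall y0 b),
        ‖g m p - f p.1 p.2‖ ≤ ε)) :
    ∃ φ : ℝ → Fin n → ℝ,
      φ t0 = y0 ∧
      (∀ t ∈ Icc t0 (t0 + min a (b / L)), ‖φ t - y0‖ ≤ b) ∧
      (∀ t ∈ Icc t0 (t0 + min a (b / L)),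
        HasDerivWithinAt φ (f t (φ t)) (Icc t0 (t0 + min a (b / L))) t) := by
  classical
  obtain ⟨g, hg_lip, hg_b, hg_approx⟩ := happrox
  set c : ℝ := min a (b / L) with hcdef
  have hc : 0 < c := lt_min ha (div_pos hb hL)
  have hca : c ≤ a := min_le_left _ _
  have hcb : L * c ≤ b := by
    have h1 : c ≤ b / L := min_le_right _ _
    rw [le_div_iff₀ hL] at h1
    linarith
  have hle : t0 ≤ t0 + c := by linarith
  set I : Set ℝ := Icc t0 (t0 + c) with hIdef
  have hIsub : I ⊆ Icc t0 (t0 + a) := Icc_subset_Icc_right (by linarith)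
  set K : Set (ℝ × (Fin n → ℝ)) := Icc t0 (t0 + a) ×ˢ Metric.closedBall y0 b with hKdef
  have hKcomp : IsCompact K := isCompact_Icc.prod (isCompact_closedBall _ _)
  -- Picard–Lindelöf for each approximation
  have hPL : ∀ m : ℕ, ∃ φ : ℝ → Fin n → ℝ, φ t0 = y0 ∧
      ∀ t ∈ I, HasDerivWithinAt φ (g m (t, φ t)) I t := by
    intro m
    have hlipm : ∀ t : ℝ, LipschitzWith (m : ℝ≥0) (fun y => g m (t, y)) := by
      intro t
      have h1 := (hg_lip m).comp (LipschitzWith.prodMk_left t)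
      rwa [mul_one] at h1
    have hpl : IsPicardLindelof (fun t y => g m (t, y)) (tmin := t0) (tmax := t0 + c)
        ⟨t0, left_mem_Icc.2 hle⟩ y0 ⟨b, hb.le⟩ 0 ⟨L, hL.le⟩ (m : ℝ≥0) :=
      { lipschitzOnWith := fun t _ => (hlipm t).lipschitzOnWith
        continuousOn := fun x _ =>
          ((hg_lip m).continuous.comp (continuous_id.prodMk continuous_const)).continuousOn
        norm_le := fun t _ x _ => hg_b m (t, x)
        mul_max_le := by
          show L * max (t0 + c - t0) (t0 - t0) ≤ b - ((0 : ℝ≥0) : ℝ)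
          rw [NNReal.coe_zero, sub_zero, add_sub_cancel_left, sub_self, max_eq_left hc.le]
          exact hcb }
    exact hpl.exists_eq_forall_mem_Icc_hasDerivWithinAt₀
  choose φ hφ0 hφd using hPL
  -- uniform Lipschitz bound on solutions
  have hφlip : ∀ (m : ℕ), ∀ s ∈ I, ∀ t ∈ I, ‖φ m t - φ m s‖ ≤ L * |t - s| := by
    intro m s hs t ht
    have h1 := Convex.norm_image_sub_le_of_norm_hasDerivWithin_le
      (f := φ m) (f' := fun u => g m (u, φ m u)) (C := L)
      (fun x hx => hφd m x hx) (fun x _ => hg_b m _) (convex_Icc _ _) hs ht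
    simpa [Real.norm_eq_abs] using h1
  have hφmem : ∀ (m : ℕ), ∀ t ∈ I, φ m t ∈ Metric.closedBall y0 b := by
    intro m t ht
    rw [Metric.mem_closedBall, dist_eq_norm]
    have h1 : ‖φ m t - y0‖ ≤ L * |t - t0| := by
      have := hφlip m t0 (left_mem_Icc.2 hle) t ht
      rwa [hφ0 m] at this
    have h2 : |t - t0| ≤ c := by
      rw [abs_of_nonneg (by linarith [ht.1])]
      linarith [ht.2]
    calc ‖φ m t - y0‖ ≤ L * |t - t0| := h1
      _ ≤ L * c := by nlinarith [abs_nonneg (t - t0)]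
      _ ≤ b := hcb
  have hφK : ∀ (m : ℕ), ∀ t ∈ I, (t, φ m t) ∈ K := fun m t ht =>
    ⟨hIsub ht, hφmem m t ht⟩
  have hφcont : ∀ m : ℕ, ContinuousOn (φ m) I := fun m t ht =>
    (hφd m t ht).continuousWithinAt
  have hGcont : ∀ m : ℕ, ContinuousOn (fun s => g m (s, φ m s)) I := fun m =>
    (hg_lip m).continuous.comp_continuousOn (continuousOn_id.prodMk (hφcont m))
  -- integral identity for each approximate solution
  have hφint : ∀ (m : ℕ), ∀ t ∈ I, φ m t = y0 + ∫ s in t0..t, g m (s, φ m s) := by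
    intro m t ht
    have hsub : Icc t0 t ⊆ I := Icc_subset_Icc_right ht.2
    have h1 := intervalIntegral.integral_eq_sub_of_hasDeriv_right_of_le ht.1
      ((hφcont m).mono hsub)
      (fun s hs => (((hφd m s ⟨hs.1.le, hs.2.le.trans ht.2⟩).hasDerivAt
        (Icc_mem_nhds hs.1 (lt_of_lt_of_le hs.2 ht.2)))).hasDerivWithinAt)
      (((hGcont m).mono hsub).intervalIntegrable_of_Icc ht.1)
    rw [hφ0 m] at h1
    rw [h1]
    abel
  -- Arzelà–Ascoli
  haveI : CompactSpace ↥I := isCompact_iff_compactSpace.mp isCompact_Icc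
  set Φ : ℕ → BoundedContinuousFunction ↥I (Fin n → ℝ) := fun m =>
    BoundedContinuousFunction.mkOfCompact
      ⟨fun t => φ m ↑t, continuousOn_iff_continuous_restrict.1 (hφcont m)⟩ with hΦdef
  have hΦapp : ∀ (m : ℕ) (x : ↥I), Φ m x = φ m ↑x := fun m x => rfl
  set A : Set (BoundedContinuousFunction ↥I (Fin n → ℝ)) := Set.range Φ with hAdef
  have hins : ∀ (u : BoundedContinuousFunction ↥I (Fin n → ℝ)) (x : ↥I),
      u ∈ A → u x ∈ Metric.closedBall y0 b := by
    rintro u x ⟨m, rfl⟩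
    rw [hΦapp]
    exact hφmem m x x.2
  have hequi : Equicontinuous (fun u : ↥A => (u : ↥I → Fin n → ℝ)) := by
    intro x₀
    apply Metric.equicontinuousAt_of_continuity_modulus (fun x : ↥I => L * dist x₀ x)
    · have hcont : Continuous fun x : ↥I => L * dist x₀ x :=
        continuous_const.mul (continuous_const.dist continuous_id)
      have := hcont.tendsto x₀
      simpa using this
    · filter_upwards with x
      rintro ⟨u, m, rfl⟩
      have h1 : dist (φ m ↑x₀) (φ m ↑x) ≤ L * dist ↑x₀ (↑x : ℝ) := by
        rw [dist_eq_norm, Real.dist_eq]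
        exact hφlip m x x.2 x₀ x₀.2
      simpa [hΦapp, Subtype.dist_eq] using h1
  have hAcomp := BoundedContinuousFunction.arzela_ascoli (Metric.closedBall y0 b)
    (isCompact_closedBall y0 b) A hins hequi
  obtain ⟨ψ, hψmem, σ, hσmono, hσtend⟩ :=
    hAcomp.isSeqCompact (x := fun m => Φ m) (fun m => subset_closure (Set.mem_range_self m))
  have hdist0 : Tendsto (fun i => dist (Φ (σ i)) ψ) atTop (𝓝 0) :=
    tendsto_iff_dist_tendsto_zero.1 hσtend
  have hpt : ∀ x : ↥I, Tendsto (fun i => Φ (σ i) x) atTop (𝓝 (ψ x)) := fun x =>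
    tendsto_iff_dist_tendsto_zero.2 (squeeze_zero (fun i => dist_nonneg)
      (fun i => BoundedContinuousFunction.dist_coe_le_dist x) hdist0)
  have hψball : ∀ x : ↥I, ψ x ∈ Metric.closedBall y0 b := fun x =>
    Metric.isClosed_closedBall.mem_of_tendsto (hpt x)
      (Filter.Eventually.of_forall fun i => by rw [hΦapp]; exact hφmem (σ i) x x.2)
  -- the limit function and righthand side
  set Ψ : ℝ → Fin n → ℝ := fun t => ψ (projIcc t0 (t0 + c) hle t) with hΨdef
  have hΨcont : Continuous Ψ := ψ.continuous.comp continuous_projIcc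
  have hΨmem : ∀ t, Ψ t ∈ Metric.closedBall y0 b := fun t => hψball _
  have hΨeq : ∀ t (ht : t ∈ I), Ψ t = ψ ⟨t, ht⟩ := by
    intro t ht
    simp only [hΨdef]
    rw [projIcc_of_mem hle ht]
  set FF : ℝ → Fin n → ℝ := fun s => f ((projIcc t0 (t0 + c) hle s : ℝ)) (Ψ s) with hFFdef
  have hFFK : ∀ s : ℝ, (((projIcc t0 (t0 + c) hle s : ℝ)), Ψ s) ∈ K := fun s =>
    ⟨hIsub (projIcc t0 (t0 + c) hle s).2, hΨmem s⟩
  have hFFcont : Continuous FF := by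
    have hmap : Continuous fun s : ℝ => (((projIcc t0 (t0 + c) hle s : ℝ)), Ψ s) :=
      (continuous_subtype_val.comp continuous_projIcc).prodMk hΨcont
    exact hf.comp_continuous hmap hFFK
  have hFFeq : ∀ t ∈ I, FF t = f t (Ψ t) := by
    intro t ht
    simp only [hFFdef]
    rw [projIcc_of_mem hle ht]
  have hFFint : ∀ t : ℝ, IntervalIntegrable FF volume t0 t := fun t =>
    hFFcont.intervalIntegrable _ _
  -- the key limit identity
  have hKey : ∀ t ∈ I, Ψ t = y0 + ∫ s in t0..t, FF s := by
    intro t ht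
    have hsub : Icc t0 t ⊆ I := Icc_subset_Icc_right ht.2
    have hIoc : Set.uIoc t0 t ⊆ I := by
      rw [uIoc_of_le ht.1]
      exact Ioc_subset_Icc_self.trans hsub
    have main : ∀ ε > 0, ‖Ψ t - (y0 + ∫ s in t0..t, FF s)‖ ≤ 0 + ε := by
      intro ε hε
      set ε' : ℝ := ε / (3 * (c + 1)) with hε'def
      have hε'pos : 0 < ε' := by positivity
      obtain ⟨δ, hδ, hδ'⟩ := Metric.uniformContinuousOn_iff.1
        (hKcomp.uniformContinuousOn_of_continuous hf) ε' hε'pos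
      obtain ⟨M, hM⟩ := hg_approx ε' hε'pos
      obtain ⟨i, hi1, hi2⟩ : ∃ i, dist (Φ (σ i)) ψ < min δ (ε / 3) ∧ M ≤ σ i := by
        have hev1 : ∀ᶠ i in atTop, dist (Φ (σ i)) ψ < min δ (ε / 3) :=
          hdist0.eventually_lt_const (lt_min hδ (by positivity))
        have hev2 : ∀ᶠ i in atTop, M ≤ σ i :=
          eventually_atTop.2 ⟨M, fun i hi => le_trans hi hσmono.le_apply⟩
        exact (hev1.and hev2).exists
      set m := σ i with hmdef
      have hφeq := hφint m t ht
      have hGsub : ∀ s ∈ Set.uIoc t0 t, ‖g m (s, φ m s) - FF s‖ ≤ ε' + ε' := by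
        intro s hs
        have hsI : s ∈ I := hIoc hs
        have h1 : ‖g m (s, φ m s) - f s (φ m s)‖ ≤ ε' := hM m hi2 _ (hφK m s hsI)
        have hdistm : dist (φ m s) (Ψ s) < δ := by
          have e1 : φ m s = Φ m ⟨s, hsI⟩ := (hΦapp m ⟨s, hsI⟩).symm
          have e2 : Ψ s = ψ ⟨s, hsI⟩ := hΨeq s hsI
          rw [e1, e2]
          exact lt_of_le_of_lt (BoundedContinuousFunction.dist_coe_le_dist _)
            (lt_of_lt_of_le hi1 (min_le_left _ _))
        have h2 : dist (f s (φ m s)) (f s (Ψ s)) < ε' := by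
          have := hδ' (s, φ m s) (hφK m s hsI) (s, Ψ s) ⟨hIsub hsI, hΨmem s⟩
            (by rw [Prod.dist_eq]; simp only [dist_self]; rw [sup_lt_iff]; exact ⟨hδ, hdistm⟩)
          exact this
        have hFFs : FF s = f s (Ψ s) := hFFeq s hsI
        calc ‖g m (s, φ m s) - FF s‖
            ≤ ‖g m (s, φ m s) - f s (φ m s)‖ + ‖f s (φ m s) - FF s‖ :=
              norm_sub_le_norm_sub_add_norm_sub _ _ _
          _ ≤ ε' + ε' := by
              refine add_le_add h1 ?_
              rw [hFFs, ← dist_eq_norm]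
              exact h2.le
      have hGint : IntervalIntegrable (fun s => g m (s, φ m s)) volume t0 t :=
        ((hGcont m).mono hsub).intervalIntegrable_of_Icc ht.1
      have hIeq : Ψ t - (y0 + ∫ s in t0..t, FF s) =
          (Ψ t - φ m t) + ∫ s in t0..t, (g m (s, φ m s) - FF s) := by
        rw [intervalIntegral.integral_sub hGint (hFFint t), hφeq]
        abel
      rw [hIeq]
      have hA : ‖Ψ t - φ m t‖ ≤ ε / 3 := by
        have e1 : φ m t = Φ m ⟨t, ht⟩ := (hΦapp m ⟨t, ht⟩).symm
        have e2 : Ψ t = ψ ⟨t, ht⟩ := hΨeq t ht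
        rw [← dist_eq_norm, e1, e2, dist_comm]
        exact le_trans (BoundedContinuousFunction.dist_coe_le_dist _)
          (le_trans hi1.le (min_le_right _ _))
      have hB : ‖∫ s in t0..t, (g m (s, φ m s) - FF s)‖ ≤ (ε' + ε') * |t - t0| :=
        intervalIntegral.norm_integral_le_of_norm_le_const hGsub
      have htt0 : |t - t0| ≤ c := by
        rw [abs_of_nonneg (by linarith [ht.1])]
        linarith [ht.2]
      have hεc : ε' * c ≤ ε / 3 := by
        rw [hε'def, div_mul_eq_mul_div, div_le_div_iff₀ (by positivity) (by norm_num)]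
        nlinarith
      calc ‖(Ψ t - φ m t) + ∫ s in t0..t, (g m (s, φ m s) - FF s)‖
          ≤ ‖Ψ t - φ m t‖ + ‖∫ s in t0..t, (g m (s, φ m s) - FF s)‖ := norm_add_le _ _
        _ ≤ ε / 3 + (ε' + ε') * |t - t0| := add_le_add hA hB
        _ ≤ ε / 3 + (ε' + ε') * c := by nlinarith [abs_nonneg (t - t0), hε'pos.le]
        _ ≤ 0 + ε := by nlinarith
    have h0 : ‖Ψ t - (y0 + ∫ s in t0..t, FF s)‖ ≤ 0 :=
      le_of_forall_pos_le_add fun ε hε => main ε hε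
    exact sub_eq_zero.1 (norm_le_zero_iff.1 h0)
  -- conclusion
  refine ⟨fun t => y0 + ∫ s in t0..t, FF s, ?_, ?_, ?_⟩
  · simp
  · intro t ht
    show ‖(y0 + ∫ s in t0..t, FF s) - y0‖ ≤ b
    rw [← hKey t ht]
    have h1 := hΨmem t
    rwa [Metric.mem_closedBall, dist_eq_norm] at h1
  · intro t ht
    have hd : HasDerivAt (fun u => y0 + ∫ s in t0..u, FF s) (FF t) t :=
      (hFFcont.integral_hasStrictDerivAt t0 t).hasDerivAt.const_add y0
    have he : FF t = f t (y0 + ∫ s in t0..t, FF s) := by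
      rw [hFFeq t ht, ← hKey t ht]
    show HasDerivWithinAt (fun u => y0 + ∫ s in t0..u, FF s)
      (f t (y0 + ∫ s in t0..t, FF s)) I t
    rw [← he]
    exact hd.hasDerivWithinAt

/-- Peano's theorem, quantitative local version: under continuity and the bound
`‖f‖ ≤ L` on `[t0, t0+a] × closedBall y0 b` (sup norm on `ℝⁿ = Fin n → ℝ`),
there is a solution of `y' = f(t,y)`, `y t0 = y0` on `[t0, t0 + min a (b/L)]`. -/
theorem peano_local (n : ℕ) (hn : 1 ≤ n) (t0 : ℝ) (y0 : Fin n → ℝ)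
    (a b L : ℝ) (ha : 0 < a) (hb : 0 < b) (hL : 0 < L)
    (f : ℝ → (Fin n → ℝ) → (Fin n → ℝ))
    (hf : ContinuousOn (fun p : ℝ × (Fin n → ℝ) => f p.1 p.2)
      (Icc t0 (t0 + a) ×ˢ Metric.closedBall y0 b))
    (hfL : ∀ t ∈ Icc t0 (t0 + a), ∀ y ∈ Metric.closedBall y0 b, ‖f t y‖ ≤ L) :
    ∃ φ : ℝ → Fin n → ℝ,
      φ t0 = y0 ∧
      (∀ t ∈ Icc t0 (t0 + min a (b / L)), ‖φ t - y0‖ ≤ b) ∧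
      (∀ t ∈ Icc t0 (t0 + min a (b / L)),
        HasDerivWithinAt φ (f t (φ t)) (Icc t0 (t0 + min a (b / L))) t) := by
  have hKcomp : IsCompact (Icc t0 (t0 + a) ×ˢ Metric.closedBall y0 b) :=
    isCompact_Icc.prod (isCompact_closedBall _ _)
  have hKne : (Icc t0 (t0 + a) ×ˢ Metric.closedBall y0 b).Nonempty :=
    ⟨(t0, y0), left_mem_Icc.2 (by linarith), mem_closedBall_self hb.le⟩
  have hF0b : ∀ p ∈ Icc t0 (t0 + a) ×ˢ Metric.closedBall y0 b,
      ‖(fun p : ℝ × (Fin n → ℝ) => f p.1 p.2) p‖ ≤ L := fun p hp => hfL p.1 hp.1 p.2 hp.2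
  exact peano_main n hn t0 y0 a b L ha hb hL f hf hfL
    (peano_exists_lipschitz_approx hKcomp hKne _ hf hL hF0b)
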